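/- arXiv:1609.05169 — 2 statements merged into one kernel-verified Lean document; each statement's English description precedes it below -/
import Mathlib

section
/- For every fixed x ≥ 0, lim_{α→1⁻} M_{α/2}(2x) = e^{-x²}/√π, where M_ρ denotes the Mainardi function. -/
open Filter

/-- The Wright function `W(z; ρ; β) = Σ_{k≥0} z^k/(k! Γ(ρk+β))`. -/
noncomputable def wright (z ρ β : ℝ) : ℝ :=
  ∑' k : ℕ, z ^ k / (k.factorial * Real.Gamma (ρ * k + β))

/-- The Mainardi function `M_ρ(z) = W(-z, -ρ, 1-ρ)`. -/
noncomputable def mainardi (ρ z : ℝ) : ℝ := wright (-z) (-ρ) (1 - ρ)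

open Real in
/-- The reciprocal Gamma function is continuous on `ℝ`. -/
lemma continuous_rGammaInv : Continuous fun s : ℝ => (Real.Gamma s)⁻¹ := by
  have h : ∀ s : ℝ, (Real.Gamma s)⁻¹ = ((Complex.Gamma (s : ℂ))⁻¹).re := by
    intro s
    rw [Complex.Gamma_ofReal, ← Complex.ofReal_inv, Complex.ofReal_re]
  simp only [h]
  exact Complex.continuous_re.comp
    (Complex.differentiable_one_div_Gamma.continuous.comp Complex.continuous_ofReal)

open Real in
/-- `Γ(m + 1/2) = √π (2m)! / (4^m m!)`. -/
lemma gamma_nat_add_half (m : ℕ) :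
    Real.Gamma (m + 1 / 2) = Real.sqrt π * (2 * m).factorial / (4 ^ m * m.factorial) := by
  induction m with
  | zero =>
    norm_num [Real.Gamma_one_half_eq]
  | succ m ih =>
    have hne : (m : ℝ) + 1 / 2 ≠ 0 := by positivity
    have h1 : ((m : ℝ) + 1) + 1 / 2 = ((m : ℝ) + 1 / 2) + 1 := by ring
    have := Real.Gamma_add_one hne
    have h2 : (2 * (m + 1)).factorial = (2 * m + 2) * ((2 * m + 1) * (2 * m).factorial) := by
      have : 2 * (m + 1) = (2 * m + 1) + 1 := by ring
      rw [this, Nat.factorial_succ, Nat.factorial_succ]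
    push_cast [h1, this, ih, h2, Nat.factorial_succ]
    have h4 : (4 : ℝ) ^ m ≠ 0 := by positivity
    have h5 : ((m.factorial : ℝ)) ≠ 0 := Nat.cast_ne_zero.mpr m.factorial_ne_zero
    field_simp
    ring

open Real in
/-- `Γ(1/2 - m) = √π (-4)^m m! / (2m)!`. -/
lemma gamma_half_sub (m : ℕ) :
    Real.Gamma (1 / 2 - m) = Real.sqrt π * (-4) ^ m * m.factorial / (2 * m).factorial := by
  induction m with
  | zero =>
    norm_num [Real.Gamma_one_half_eq]
  | succ m ih =>
    have hne : (1 : ℝ) / 2 - ((m : ℝ) + 1) ≠ 0 := by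
      have : (0:ℝ) ≤ (m:ℝ) := Nat.cast_nonneg m
      intro h; linarith [h]
    have key := Real.Gamma_add_one hne
    rw [show (1 / 2 - ((m : ℝ) + 1)) + 1 = 1 / 2 - m by ring] at key
    have h2 : (2 * (m + 1)).factorial = (2 * m + 2) * ((2 * m + 1) * (2 * m).factorial) := by
      have : 2 * (m + 1) = (2 * m + 1) + 1 := by ring
      rw [this, Nat.factorial_succ, Nat.factorial_succ]
    have h5 : ((2*m).factorial : ℝ) ≠ 0 := Nat.cast_ne_zero.mpr (Nat.factorial_ne_zero _)
    have hG : Real.Gamma (1 / 2 - ((m : ℝ) + 1)) =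
        Real.Gamma (1/2 - m) / (1 / 2 - ((m : ℝ) + 1)) := by
      rw [eq_div_iff hne, mul_comm, ← key]
    rw [show ((m:ℕ)+1 : ℕ) = ((m:ℝ)+1 : ℝ) from by push_cast; ring] at *
    rw [hG, div_eq_iff hne, ih, h2]
    have h6 : (2*(m:ℝ)+2) ≠ 0 := by positivity
    have h7 : (2*(m:ℝ)+1) ≠ 0 := by positivity
    push_cast [Nat.factorial_succ]
    field_simp
    ring

open Real in
/-- For fixed `x ≥ 0`, `M_{α/2}(2x) → e^{-x²}/√π` as `α → 1⁻`. -/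
theorem mainardi_tendsto_gaussian (x : ℝ) (hx : 0 ≤ x) :
    Tendsto (fun α : ℝ => mainardi (α / 2) (2 * x)) (nhdsWithin 1 (Set.Iio 1))
      (nhds (Real.exp (-x ^ 2) / Real.sqrt Real.pi)) := by
  have hπ : (0:ℝ) < π := Real.pi_pos
  set F : ℝ → ℕ → ℝ := fun α k =>
    (-(2 * x)) ^ k / (k.factorial * Real.Gamma (-(α / 2) * k + (1 - α / 2))) with hF
  set b : ℕ → ℝ := fun k =>
    (2*x)^k * (Real.Gamma (1/4) + Real.Gamma ((k+1)/2)) / (k.factorial * π) with hb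
  -- summability of the dominating series
  have hc : Summable (fun k : ℕ => (2*x)^k * Real.Gamma ((k+1)/2) / k.factorial) := by
    refine Summable.even_add_odd ?_ ?_
    · apply Summable.congr ((Real.summable_pow_div_factorial (x^2)).mul_left (Real.sqrt π))
      intro m
      rw [show (((2*m : ℕ):ℝ)+1)/2 = (m:ℝ) + 1/2 by push_cast; ring, gamma_nat_add_half]
      have e3 : (2*x)^(2*m) = 4^m * (x^2)^m := by
        rw [pow_mul, show (2*x)^2 = 4*x^2 by ring, mul_pow]
      have h1 : ((2*m).factorial : ℝ) ≠ 0 := Nat.cast_ne_zero.mpr (Nat.factorial_ne_zero _)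
      have h2 : ((m.factorial : ℝ)) ≠ 0 := Nat.cast_ne_zero.mpr m.factorial_ne_zero
      have h3 : (4:ℝ)^m ≠ 0 := by positivity
      rw [e3]
      field_simp
    · have hbb : Summable (fun m : ℕ => ((1+2*x)^2)^(m+1)/((m+1).factorial : ℝ)) :=
        (summable_nat_add_iff (f := fun n : ℕ => ((1+2*x)^2)^n/(n.factorial:ℝ)) 1).2
          (Real.summable_pow_div_factorial ((1+2*x)^2))
      refine Summable.of_nonneg_of_le (fun m => by positivity) (fun m => ?_) hbb
      rw [show (((2*m+1 : ℕ):ℝ)+1)/2 = ((m:ℕ):ℝ) + 1 by push_cast; ring,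
        Real.Gamma_nat_eq_factorial]
      have hfac : (m.factorial * (m+1).factorial : ℕ) ≤ (2*m+1).factorial := by
        have h := Nat.choose_mul_factorial_mul_factorial (show m ≤ 2*m+1 by omega)
        rw [show 2*m+1-m = m+1 by omega] at h
        calc m.factorial * (m+1).factorial
            ≤ (2*m+1).choose m * (m.factorial * (m+1).factorial) :=
              Nat.le_mul_of_pos_left _ (Nat.choose_pos (by omega))
          _ = (2*m+1).factorial := by rw [← mul_assoc]; exact h
      have hp : (2*x)^(2*m+1) ≤ ((1+2*x)^2)^(m+1) := by
        calc (2*x)^(2*m+1) ≤ (1+2*x)^(2*m+1) :=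
              pow_le_pow_left₀ (by positivity) (by linarith) _
          _ ≤ (1+2*x)^(2*(m+1)) := pow_le_pow_right₀ (by linarith) (by omega)
          _ = ((1+2*x)^2)^(m+1) := by rw [← pow_mul]
      rw [div_le_div_iff₀ (by positivity) (by positivity)]
      calc (2*x)^(2*m+1) * (m.factorial:ℝ) * ((m+1).factorial:ℝ)
          = (2*x)^(2*m+1) * ((m.factorial:ℝ) * ((m+1).factorial:ℝ)) := by ring
        _ ≤ ((1+2*x)^2)^(m+1) * ((2*m+1).factorial:ℝ) := by
            gcongr ?_ * ?_
            · exact_mod_cast hfac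
  have hbsum : Summable b := by
    apply Summable.congr
      (((Real.summable_pow_div_factorial (2*x)).mul_right (Real.Gamma (1/4) / π)).add
        (hc.mul_right π⁻¹))
    intro k
    have hk : ((k.factorial : ℝ)) ≠ 0 := Nat.cast_ne_zero.mpr k.factorial_ne_zero
    simp only [hb]
    field_simp
  -- pointwise convergence
  have hpt : ∀ k, Tendsto (F · k) (nhdsWithin 1 (Set.Iio 1)) (nhds (F 1 k)) := by
    intro k
    have hcont : Continuous fun α : ℝ => F α k := by
      simp only [hF, div_eq_mul_inv, mul_inv]
      refine continuous_const.mul (continuous_const.mul ?_)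
      exact continuous_rGammaInv.comp (by continuity)
    exact (hcont.tendsto 1).mono_left nhdsWithin_le_nhds
  -- the domination bound
  have hbd : ∀ᶠ α in nhdsWithin 1 (Set.Iio 1), ∀ k, ‖F α k‖ ≤ b k := by
    have hmem : Set.Ioo (1/2 : ℝ) 1 ∈ nhdsWithin 1 (Set.Iio 1) := by
      rw [← Set.Ioi_inter_Iio]
      exact inter_mem
        (mem_nhdsWithin_of_mem_nhds (isOpen_Ioi.mem_nhds (by norm_num)))
        self_mem_nhdsWithin
    filter_upwards [hmem] with α hα k
    obtain ⟨hα1, hα2⟩ := hα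
    set s : ℝ := -(α / 2) * k + (1 - α / 2) with hs
    have hks : (0:ℝ) ≤ k := Nat.cast_nonneg k
    have h1s : 1 - s = α * (k+1) / 2 := by rw [hs]; ring
    have h1pos : 0 < 1 - s := by rw [h1s]; positivity
    have hΓ1s : 0 < Real.Gamma (1-s) := Real.Gamma_pos_of_pos h1pos
    have hΓ14 : 0 < Real.Gamma (1/4) := Real.Gamma_pos_of_pos (by norm_num)
    have hΓk : 0 < Real.Gamma (((k:ℝ)+1)/2) := Real.Gamma_pos_of_pos (by positivity)
    -- step A : |Γ s|⁻¹ ≤ Γ(1-s)/π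
    have stepA : |Real.Gamma s|⁻¹ ≤ Real.Gamma (1-s) / π := by
      rcases eq_or_ne (Real.Gamma s) 0 with h0 | h0
      · rw [h0, abs_zero, inv_zero]; positivity
      · have hrefl := Real.Gamma_mul_Gamma_one_sub s
        have hsin : Real.sin (π * s) ≠ 0 := by
          intro h
          rw [h, div_zero] at hrefl
          exact (mul_ne_zero h0 hΓ1s.ne') hrefl
        rw [eq_div_iff hsin] at hrefl
        have hinv : (Real.Gamma s)⁻¹ = Real.Gamma (1-s) * Real.sin (π * s) / π := by
          have h2 : Real.Gamma (1-s) * Real.sin (π * s) = π / Real.Gamma s := by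
            rw [eq_div_iff h0]; linear_combination hrefl
          rw [h2, div_div, mul_comm, ← div_div, div_self hπ.ne', one_div]
        calc |Real.Gamma s|⁻¹ = |(Real.Gamma s)⁻¹| := (abs_inv _).symm
          _ = Real.Gamma (1-s) * |Real.sin (π * s)| / π := by
              rw [hinv, abs_div, abs_mul, abs_of_pos hΓ1s, abs_of_pos hπ]
          _ ≤ Real.Gamma (1-s) * 1 / π := by
              gcongr
              exact abs_le.mpr ⟨Real.neg_one_le_sin _, Real.sin_le_one _⟩
          _ = Real.Gamma (1-s) / π := by rw [mul_one]
    -- step B : Γ(1-s) ≤ Γ(1/4) + Γ((k+1)/2)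
    have stepB : Real.Gamma (1-s) ≤ Real.Gamma (1/4) + Real.Gamma (((k:ℝ)+1)/2) := by
      have hle : (1/4 : ℝ) ≤ ((k:ℝ)+1)/2 := by linarith
      have hseg : (1-s) ∈ segment ℝ (1/4 : ℝ) (((k:ℝ)+1)/2) := by
        rw [segment_eq_Icc hle]
        constructor
        · rw [h1s]; nlinarith
        · rw [h1s]; nlinarith
      have := Real.convexOn_Gamma.le_on_segment (by norm_num : (1/4:ℝ) ∈ Set.Ioi (0:ℝ))
        (Set.mem_Ioi.mpr (by positivity) : ((k:ℝ)+1)/2 ∈ Set.Ioi (0:ℝ)) hseg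
      calc Real.Gamma (1-s) ≤ max (Real.Gamma (1/4)) (Real.Gamma (((k:ℝ)+1)/2)) := this
        _ ≤ Real.Gamma (1/4) + Real.Gamma (((k:ℝ)+1)/2) :=
            max_le (by linarith) (by linarith)
    have hnorm : ‖F α k‖ = (2*x)^k / k.factorial * |Real.Gamma s|⁻¹ := by
      rw [hF]
      simp only
      rw [Real.norm_eq_abs, abs_div, abs_pow, abs_neg,
        abs_of_nonneg (by positivity : (0:ℝ) ≤ 2*x), abs_mul, Nat.abs_cast, ← div_div,
        div_eq_mul_inv]
    rw [hnorm]
    simp only [hb]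
    have hA2 : |Real.Gamma s|⁻¹ ≤ (Real.Gamma (1/4) + Real.Gamma (((k:ℝ)+1)/2)) / π :=
      stepA.trans (by gcongr)
    calc (2*x)^k / k.factorial * |Real.Gamma s|⁻¹
        ≤ (2*x)^k / k.factorial * ((Real.Gamma (1/4) + Real.Gamma (((k:ℝ)+1)/2)) / π) :=
          mul_le_mul_of_nonneg_left hA2 (by positivity)
      _ = (2*x)^k * (Real.Gamma (1/4) + Real.Gamma (((k:ℝ)+1)/2)) / (k.factorial * π) := by
          rw [div_mul_div_comm]
  -- the value at the limit point
  have hval : ∑' k, F 1 k = Real.exp (-x^2) / Real.sqrt π := by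
    have he : HasSum (fun m : ℕ => F 1 (2*m)) (Real.exp (-x^2) / Real.sqrt π) := by
      have hterm : ∀ m : ℕ, F 1 (2*m) = (-x^2)^m / m.factorial / Real.sqrt π := by
        intro m
        rw [hF]
        simp only
        rw [show -((1:ℝ)/2) * ((2*m : ℕ):ℝ) + (1 - 1/2) = 1/2 - (m:ℝ) by push_cast; ring,
          gamma_half_sub]
        have e2 : ((-x^2:ℝ))^m = (4*x^2)^m / (-4)^m := by
          rw [← div_pow, show (4*x^2)/(-4 : ℝ) = -x^2 by ring]
        have e3 : (-(2*x))^(2*m) = 4^m * (x^2)^m := by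
          rw [pow_mul, show (-(2*x))^2 = 4*x^2 by ring, mul_pow]
        have h1 : ((2*m).factorial : ℝ) ≠ 0 := Nat.cast_ne_zero.mpr (Nat.factorial_ne_zero _)
        have h2 : ((m.factorial : ℝ)) ≠ 0 := Nat.cast_ne_zero.mpr m.factorial_ne_zero
        have h3 : (4:ℝ)^m ≠ 0 := by positivity
        have h4 : Real.sqrt π ≠ 0 := (Real.sqrt_pos.mpr hπ).ne'
        have h5 : ((-4:ℝ))^m ≠ 0 := pow_ne_zero _ (by norm_num)
        rw [e2, e3]
        field_simp
        ring
      have base : HasSum (fun m : ℕ => (-x^2)^m / m.factorial) (Real.exp (-x^2)) := by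
        rw [Real.exp_eq_exp_ℝ]
        exact NormedSpace.expSeries_div_hasSum_exp (-x^2)
      simpa only [hterm] using base.div_const (Real.sqrt π)
    have ho : HasSum (fun m : ℕ => F 1 (2*m+1)) 0 := by
      have hterm : ∀ m : ℕ, F 1 (2*m+1) = 0 := by
        intro m
        rw [hF]
        simp only
        rw [show -((1:ℝ)/2) * ((2*m+1 : ℕ):ℝ) + (1 - 1/2) = -(m:ℝ) by push_cast; ring,
          Real.Gamma_neg_nat_eq_zero, mul_zero, div_zero]
      simpa only [hterm] using (hasSum_zero : HasSum (fun _ : ℕ => (0:ℝ)) 0)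
    have h := he.even_add_odd ho
    rw [add_zero] at h
    exact h.tsum_eq
  have key := tendsto_tsum_of_dominated_convergence hbsum hpt hbd
  have hmain : (fun α : ℝ => mainardi (α / 2) (2 * x)) = fun α => ∑' k, F α k := rfl
  rw [hmain, ← hval]
  exact key
end

section
/- Let 0 < α < 1, ξ > 0, s(t) = 2ξ t^{α/2}, and u(x,t) = 1 − [1 − W(-x/t^{α/2}, -α/2, 1)]/D with D = 1 − W(-2ξ, -α/2, 1). Then ∫_0^{s(t)} z·u(z,t) dz = 2ξ² t^α (1 − 1/D) − t^α W(-2ξ, -α/2, 1+α)/D − 2ξ t^α W(-2ξ, -α/2, 1+α/2)/D + t^α/(D·Γ(1+α)). -/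
open MeasureTheory

section WrightAux

open Set Finset

lemma gamma_ge {y : ℝ} (hy : 1 ≤ y) : Real.exp (-1) ≤ Real.Gamma y := by
  have h0 : (0:ℝ) < y := lt_of_lt_of_le one_pos hy
  rw [Real.Gamma_eq_integral h0, ← integral_exp_neg_Ioi 1]
  have hexp : IntegrableOn (fun x => Real.exp (-x)) (Ioi (1:ℝ)) := by
    simpa using exp_neg_integrableOn_Ioi 1 one_pos
  have hint : IntegrableOn (fun x => Real.exp (-x) * x ^ (y - 1)) (Ioi 0) :=
    Real.GammaIntegral_convergent h0
  have hsub : Ioi (1:ℝ) ⊆ Ioi 0 := Ioi_subset_Ioi zero_le_one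
  calc (∫ x in Ioi (1:ℝ), Real.exp (-x))
      ≤ ∫ x in Ioi (1:ℝ), Real.exp (-x) * x ^ (y - 1) := by
        refine setIntegral_mono_on hexp (hint.mono_set hsub) measurableSet_Ioi (fun x hx => ?_)
        have hx1 : (1:ℝ) ≤ x := le_of_lt hx
        have h1 : (1:ℝ) ≤ x ^ (y - 1) := Real.one_le_rpow hx1 (by linarith)
        nlinarith [Real.exp_pos (-x)]
    _ ≤ ∫ x in Ioi (0:ℝ), Real.exp (-x) * x ^ (y - 1) := by
        refine setIntegral_mono_set hint ?_ (HasSubset.Subset.eventuallyLE hsub)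
        refine (ae_restrict_iff' measurableSet_Ioi).2 (ae_of_all _ fun x hx => ?_)
        have : (0:ℝ) < x := hx
        positivity

lemma gamma_prod (x : ℝ) (hx : Real.Gamma x ≠ 0) :
    ∀ n : ℕ, Real.Gamma (x + n) = (∏ i ∈ Finset.range n, (x + i)) * Real.Gamma x := by
  intro n
  induction n with
  | zero => simp
  | succ n ih =>
    have hxn : x + n ≠ 0 := by
      intro h
      have : x = -(n:ℝ) := by linarith
      rw [this] at hx
      exact hx (Real.Gamma_neg_nat_eq_zero n)
    have : x + (n+1:ℕ) = (x + n) + 1 := by push_cast; ring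
    rw [this, Real.Gamma_add_one hxn, ih, Finset.prod_range_succ]
    ring

lemma inv_gamma_le (x : ℝ) (n : ℕ) (h1 : 1 ≤ x + n) :
    |Real.Gamma x|⁻¹ ≤ Real.exp 1 * ∏ i ∈ Finset.range n, (|x| + i) := by
  rcases eq_or_ne (Real.Gamma x) 0 with h | h
  · rw [h, abs_zero, inv_zero]
    have : (0:ℝ) ≤ ∏ i ∈ Finset.range n, (|x| + i) :=
      Finset.prod_nonneg fun i _ => by positivity
    positivity
  · have hΓ : Real.Gamma (x + n) = (∏ i ∈ Finset.range n, (x + i)) * Real.Gamma x :=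
      gamma_prod x h n
    have hge : Real.exp (-1) ≤ Real.Gamma (x + n) := gamma_ge h1
    have hpos : 0 < Real.Gamma (x + n) := lt_of_lt_of_le (Real.exp_pos _) hge
    have hprod_ne : (∏ i ∈ Finset.range n, (x + (i:ℝ))) ≠ 0 := by
      intro h0
      rw [hΓ, h0, zero_mul] at hpos
      exact lt_irrefl 0 hpos
    have habs : |Real.Gamma x|⁻¹ = |∏ i ∈ Finset.range n, (x + i)| / Real.Gamma (x + n) := by
      have hG : Real.Gamma (x + n) = |∏ i ∈ Finset.range n, (x + (i:ℝ))| * |Real.Gamma x| := by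
        rw [← abs_mul, ← hΓ, abs_of_pos hpos]
      rw [hG]
      field_simp
    rw [habs]
    have h2 : |∏ i ∈ Finset.range n, (x + i)| ≤ ∏ i ∈ Finset.range n, (|x| + i) := by
      rw [Finset.abs_prod]
      refine Finset.prod_le_prod (fun i _ => abs_nonneg _) (fun i _ => ?_)
      calc |x + (i:ℝ)| ≤ |x| + |(i:ℝ)| := abs_add_le _ _
        _ = |x| + i := by rw [Nat.abs_cast]
    calc |∏ i ∈ Finset.range n, (x + i)| / Real.Gamma (x + n)
        ≤ (∏ i ∈ Finset.range n, (|x| + i)) / Real.exp (-1) := by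
          exact div_le_div₀ (Finset.prod_nonneg fun i _ => by positivity) h2
            (Real.exp_pos _) hge
      _ = Real.exp 1 * ∏ i ∈ Finset.range n, (|x| + i) := by
          rw [Real.exp_neg, div_eq_mul_inv, inv_inv, mul_comm]

lemma summable_bound (γ β c : ℝ) (hγ0 : 0 < γ) (hγ : 2 * γ ≤ 1) :
    Summable (fun k : ℕ => |c| ^ k / (k.factorial * |Real.Gamma (β - γ * k)|)) := by
  set N₀ : ℕ := ⌈1 - β⌉₊ with hN₀
  set M : ℕ := N₀ + ⌈|β|⌉₊ + 2 with hM
  set n : ℕ → ℕ := fun k => N₀ + (k + 1) / 2 with hn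
  set b : ℕ → ℝ := fun k => Real.exp 1 * ((M : ℝ) + k) ^ n k * |c| ^ k / k.factorial with hb
  have hb0 : ∀ k, 0 ≤ b k := by
    intro k
    have hMk : (0:ℝ) ≤ (M:ℝ) + k := by positivity
    simp only [hb]
    positivity
  have hle : ∀ k : ℕ, |c| ^ k / (k.factorial * |Real.Gamma (β - γ * k)|) ≤ b k := by
    intro k
    have hk2 : ((k + 1) / 2 : ℕ) ≤ ((k : ℝ) + 1) / 2 := by
      have := Nat.cast_div_le (m := k + 1) (n := 2) (α := ℝ)
      push_cast at this ⊢
      linarith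
    have hk2' : (k : ℝ) / 2 ≤ (((k + 1) / 2 : ℕ) : ℝ) := by
      have h : k ≤ 2 * ((k + 1) / 2) := by omega
      have := (Nat.cast_le (α := ℝ)).2 h
      push_cast at this
      linarith
    have hγk : γ * k ≤ (k : ℝ) / 2 := by nlinarith [Nat.cast_nonneg (α := ℝ) k]
    have hN : (1 - β) ≤ (N₀ : ℝ) := Nat.le_ceil _
    have h1 : 1 ≤ (β - γ * k) + (n k : ℕ) := by
      have : (n k : ℝ) = (N₀ : ℝ) + (((k + 1) / 2 : ℕ) : ℝ) := by simp [hn]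
      rw [this]
      linarith
    have hbound := inv_gamma_le (β - γ * k) (n k) h1
    have hfac : ∀ i ∈ Finset.range (n k), |β - γ * k| + (i : ℝ) ≤ (M : ℝ) + k := by
      intro i hi
      have hib : (i : ℝ) ≤ (n k : ℝ) - 1 := by
        have : i + 1 ≤ n k := Finset.mem_range.1 hi
        have := (Nat.cast_le (α := ℝ)).2 this
        push_cast at this
        linarith
      have hnk : (n k : ℝ) ≤ (N₀ : ℝ) + ((k : ℝ) + 1) / 2 := by
        have : (n k : ℝ) = (N₀ : ℝ) + (((k + 1) / 2 : ℕ) : ℝ) := by simp [hn]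
        rw [this]; linarith
      have habs : |β - γ * k| ≤ |β| + (k : ℝ) / 2 := by
        have h1 : |β - γ * k| ≤ |β| + |γ * k| := abs_sub _ _
        have h2 : |γ * k| = γ * k := abs_of_nonneg (by positivity)
        linarith
      have hβc : |β| ≤ (⌈|β|⌉₊ : ℝ) := Nat.le_ceil _
      have hMc : (M : ℝ) = (N₀ : ℝ) + (⌈|β|⌉₊ : ℝ) + 2 := by simp [hM]
      rw [hMc]
      linarith
    have hprod : ∏ i ∈ Finset.range (n k), (|β - γ * k| + i) ≤ ((M : ℝ) + k) ^ n k := by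
      calc ∏ i ∈ Finset.range (n k), (|β - γ * k| + i)
          ≤ ∏ _i ∈ Finset.range (n k), ((M : ℝ) + k) :=
            Finset.prod_le_prod (fun i _ => by positivity) hfac
        _ = ((M : ℝ) + k) ^ n k := by rw [Finset.prod_const, Finset.card_range]
    have hre : |c| ^ k / ((k.factorial : ℝ) * |Real.Gamma (β - γ * k)|)
        = |c| ^ k / (k.factorial : ℝ) * |Real.Gamma (β - γ * k)|⁻¹ := by
      rw [← div_div, div_eq_mul_inv]
    rw [hre]
    have hcc : |Real.Gamma (β - γ * k)|⁻¹ ≤ Real.exp 1 * ((M : ℝ) + k) ^ n k := by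
      calc |Real.Gamma (β - γ * k)|⁻¹
          ≤ Real.exp 1 * ∏ i ∈ Finset.range (n k), (|β - γ * k| + i) := hbound
        _ ≤ Real.exp 1 * ((M : ℝ) + k) ^ n k := by
            exact mul_le_mul_of_nonneg_left hprod (Real.exp_pos 1).le
    calc |c| ^ k / (k.factorial : ℝ) * |Real.Gamma (β - γ * k)|⁻¹
        ≤ |c| ^ k / (k.factorial : ℝ) * (Real.exp 1 * ((M : ℝ) + k) ^ n k) := by
          exact mul_le_mul_of_nonneg_left hcc (by positivity)
      _ = b k := by simp only [hb]; ring
  have hstep : ∀ k : ℕ, b (k + 2)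
      ≤ (Real.exp 2 * |c| ^ 2 * ((M : ℝ) + k + 2) / (((k : ℝ) + 1) * ((k : ℝ) + 2))) * b k := by
    intro k
    have hnk : n (k + 2) = n k + 1 := by simp only [hn]; omega
    have hnkM : (n k : ℝ) ≤ (M : ℝ) + k := by
      have : n k ≤ M + k := by simp only [hn, hM]; omega
      exact_mod_cast this
    have hMk : (0 : ℝ) < (M : ℝ) + k := by
      have : 2 ≤ M := by simp only [hM]; omega
      have := (Nat.cast_le (α := ℝ)).2 this
      push_cast at this
      positivity
    have hpow : ((M : ℝ) + ((k : ℝ) + 2)) ^ n k ≤ Real.exp 2 * ((M : ℝ) + k) ^ n k := by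
      have h1 : (M : ℝ) + ((k : ℝ) + 2) = ((M : ℝ) + k) * (1 + 2 / ((M : ℝ) + k)) := by
        field_simp
        ring
      rw [h1, mul_pow]
      have h3 : 1 + 2 / ((M : ℝ) + k) ≤ Real.exp (2 / ((M : ℝ) + k)) := by
        have := Real.add_one_le_exp (2 / ((M : ℝ) + k)); linarith
    
      have h2 : (1 + 2 / ((M : ℝ) + k)) ^ n k ≤ Real.exp 2 := by
        calc (1 + 2 / ((M : ℝ) + k)) ^ n k
            ≤ Real.exp (2 / ((M : ℝ) + k)) ^ n k := by
              apply pow_le_pow_left₀ (by positivity) h3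
          _ = Real.exp ((n k : ℝ) * (2 / ((M : ℝ) + k))) := by rw [← Real.exp_nat_mul]
          _ ≤ Real.exp 2 := by
              apply Real.exp_le_exp.2
              rw [mul_div_assoc', div_le_iff₀ hMk]
              nlinarith
      calc ((M : ℝ) + k) ^ n k * (1 + 2 / ((M : ℝ) + k)) ^ n k
          ≤ ((M : ℝ) + k) ^ n k * Real.exp 2 :=
            mul_le_mul_of_nonneg_left h2 (by positivity)
        _ = Real.exp 2 * ((M : ℝ) + k) ^ n k := mul_comm _ _
    have hb2 : b (k + 2) = Real.exp 1 * (((M : ℝ) + ((k : ℝ) + 2)) ^ n k * ((M : ℝ) + ((k : ℝ) + 2)))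
        * (|c| ^ k * |c| ^ 2) / (((k : ℝ) + 2) * (((k : ℝ) + 1) * (k.factorial : ℝ))) := by
      simp only [hb, hnk]
      rw [pow_succ, pow_add]
      have hfac2 : ((k + 2).factorial : ℝ) = ((k : ℝ) + 2) * (((k : ℝ) + 1) * (k.factorial : ℝ)) := by
        rw [show k + 2 = (k + 1) + 1 by ring, Nat.factorial_succ, Nat.factorial_succ]
        push_cast
        ring
      rw [hfac2]
      push_cast
      ring
    have hMk2 : (0 : ℝ) ≤ (M : ℝ) + ((k : ℝ) + 2) := by positivity
    rw [hb2]
    calc Real.exp 1 * (((M : ℝ) + ((k : ℝ) + 2)) ^ n k * ((M : ℝ) + ((k : ℝ) + 2)))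
          * (|c| ^ k * |c| ^ 2) / (((k : ℝ) + 2) * (((k : ℝ) + 1) * (k.factorial : ℝ)))
        ≤ Real.exp 1 * ((Real.exp 2 * ((M : ℝ) + k) ^ n k) * ((M : ℝ) + ((k : ℝ) + 2)))
          * (|c| ^ k * |c| ^ 2) / (((k : ℝ) + 2) * (((k : ℝ) + 1) * (k.factorial : ℝ))) := by
          gcongr
      _ = (Real.exp 2 * |c| ^ 2 * ((M : ℝ) + k + 2) / (((k : ℝ) + 1) * ((k : ℝ) + 2))) * b k := by
          simp only [hb]
          have hk1 : ((k : ℝ) + 1) ≠ 0 := by positivity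
          have hk2 : ((k : ℝ) + 2) ≠ 0 := by positivity
          have hkf : ((k.factorial : ℝ)) ≠ 0 := by positivity
          field_simp
          ring
  have hKex : ∀ k : ℕ, (⌈2 * Real.exp 2 * |c| ^ 2 * ((M : ℝ) + 2)⌉₊ ≤ k) → b (k + 2) ≤ 1 / 2 * b k := by
    intro k hk
    have hck : 2 * Real.exp 2 * |c| ^ 2 * ((M : ℝ) + 2) ≤ (k : ℝ) :=
      le_trans (Nat.le_ceil _) ((Nat.cast_le (α := ℝ)).2 hk)
    have hA : (0 : ℝ) ≤ Real.exp 2 * |c| ^ 2 := by positivity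
    have hM0 : (0 : ℝ) ≤ (M : ℝ) := Nat.cast_nonneg _
    have hk0 : (0 : ℝ) ≤ (k : ℝ) := Nat.cast_nonneg _
    have hRle : Real.exp 2 * |c| ^ 2 * ((M : ℝ) + k + 2) / (((k : ℝ) + 1) * ((k : ℝ) + 2)) ≤ 1 / 2 := by
      rw [div_le_iff₀ (by positivity)]
      have hM2 : (M : ℝ) + k + 2 ≤ ((M : ℝ) + 2) * ((k : ℝ) + 1) := by nlinarith
      have h5 : Real.exp 2 * |c| ^ 2 * ((M : ℝ) + k + 2)
          ≤ Real.exp 2 * |c| ^ 2 * (((M : ℝ) + 2) * ((k : ℝ) + 1)) :=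
        mul_le_mul_of_nonneg_left hM2 hA
      have h6 : Real.exp 2 * |c| ^ 2 * (((M : ℝ) + 2) * ((k : ℝ) + 1))
          ≤ (k : ℝ) / 2 * ((k : ℝ) + 1) := by nlinarith
      nlinarith
    calc b (k + 2) ≤ (Real.exp 2 * |c| ^ 2 * ((M : ℝ) + k + 2) / (((k : ℝ) + 1) * ((k : ℝ) + 2))) * b k :=
          hstep k
      _ ≤ 1 / 2 * b k := mul_le_mul_of_nonneg_right hRle (hb0 k)
  set K : ℕ := ⌈2 * Real.exp 2 * |c| ^ 2 * ((M : ℝ) + 2)⌉₊ with hK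
  have hEven : Summable (fun j : ℕ => b (2 * j)) := by
    apply summable_of_ratio_norm_eventually_le (r := 1 / 2) (by norm_num)
    rw [Filter.eventually_atTop]
    refine ⟨K, fun j hj => ?_⟩
    have h2j : K ≤ 2 * j := le_trans hj (by omega)
    have := hKex (2 * j) h2j
    rw [Real.norm_eq_abs, Real.norm_eq_abs, abs_of_nonneg (hb0 _), abs_of_nonneg (hb0 _)]
    calc b (2 * (j + 1)) = b (2 * j + 2) := by norm_num [Nat.mul_succ]
      _ ≤ 1 / 2 * b (2 * j) := this
  have hOdd : Summable (fun j : ℕ => b (2 * j + 1)) := by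
    apply summable_of_ratio_norm_eventually_le (r := 1 / 2) (by norm_num)
    rw [Filter.eventually_atTop]
    refine ⟨K, fun j hj => ?_⟩
    have h2j : K ≤ 2 * j + 1 := le_trans hj (by omega)
    have := hKex (2 * j + 1) h2j
    rw [Real.norm_eq_abs, Real.norm_eq_abs, abs_of_nonneg (hb0 _), abs_of_nonneg (hb0 _)]
    calc b (2 * (j + 1) + 1) = b (2 * j + 1 + 2) := by norm_num [Nat.mul_succ]
      _ ≤ 1 / 2 * b (2 * j + 1) := this
  have hbS : Summable b := (hEven.hasSum.even_add_odd hOdd.hasSum).summable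
  exact Summable.of_nonneg_of_le (fun k => by positivity) hle hbS

lemma summable_wright (γ β z : ℝ) (hγ0 : 0 < γ) (hγ : 2 * γ ≤ 1) :
    Summable (fun k : ℕ => z ^ k / ((k.factorial : ℝ) * Real.Gamma (-γ * k + β))) := by
  apply Summable.of_norm_bounded (summable_bound γ β z hγ0 hγ)
  intro k
  have h1 : -γ * (k : ℝ) + β = β - γ * k := by ring
  rw [h1, Real.norm_eq_abs, abs_div, abs_pow, abs_mul, Nat.abs_cast]

lemma series_id (γ a : ℝ) (hγ0 : 0 < γ) (hγ : 2 * γ ≤ 1) :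
    ∑' k : ℕ, (-1) ^ k * a ^ (k + 2) / (((k : ℝ) + 2) * k.factorial * Real.Gamma (1 - γ * k))
      = 1 / Real.Gamma (1 + 2 * γ) - wright (-a) (-γ) (1 + 2 * γ)
        - a * wright (-a) (-γ) (1 + γ) := by
  have hW2 : Summable
      (fun k : ℕ => (-a) ^ k / ((k.factorial : ℝ) * Real.Gamma (-γ * k + (1 + 2 * γ)))) :=
    summable_wright γ (1 + 2 * γ) (-a) hγ0 hγ
  have hW1 : Summable
      (fun k : ℕ => (-a) ^ k / ((k.factorial : ℝ) * Real.Gamma (-γ * k + (1 + γ)))) :=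
    summable_wright γ (1 + γ) (-a) hγ0 hγ
  have hT : Summable (fun j : ℕ =>
      (-a) ^ (j + 1) / (((j + 1).factorial : ℝ) * Real.Gamma (-γ * (↑(j + 1)) + (1 + 2 * γ)))) :=
    (summable_nat_add_iff 1).2 hW2
  have hw2 : wright (-a) (-γ) (1 + 2 * γ)
      = ∑' k : ℕ, (-a) ^ k / ((k.factorial : ℝ) * Real.Gamma (-γ * k + (1 + 2 * γ))) := rfl
  have hw1 : wright (-a) (-γ) (1 + γ)
      = ∑' k : ℕ, (-a) ^ k / ((k.factorial : ℝ) * Real.Gamma (-γ * k + (1 + γ))) := rfl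
  rw [hw2, hw1, Summable.tsum_eq_zero_add hW2]
  have hf0 : (-a) ^ 0 / (((0:ℕ).factorial : ℝ) * Real.Gamma (-γ * (0:ℕ) + (1 + 2 * γ)))
      = 1 / Real.Gamma (1 + 2 * γ) := by norm_num
  rw [hf0]
  set c : ℕ → ℝ := fun j =>
    -((-a) ^ (j + 1) / (((j + 1).factorial : ℝ) * Real.Gamma (-γ * (↑(j + 1)) + (1 + 2 * γ))))
      - a * ((-a) ^ j / ((j.factorial : ℝ) * Real.Gamma (-γ * j + (1 + γ)))) with hc
  have hsum_c : Summable c := hT.neg.sub (hW1.mul_left a)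
  have hcsum : ∑' j, c j
      = -(∑' j : ℕ, (-a) ^ (j + 1) / (((j + 1).factorial : ℝ) * Real.Gamma (-γ * (↑(j + 1)) + (1 + 2 * γ))))
        - a * ∑' j : ℕ, (-a) ^ j / ((j.factorial : ℝ) * Real.Gamma (-γ * j + (1 + γ))) := by
    rw [Summable.tsum_sub hT.neg (hW1.mul_left a), tsum_neg, tsum_mul_left]
  rw [sub_add_eq_sub_sub, sub_self, zero_sub, ← hcsum, Summable.tsum_eq_zero_add hsum_c]
  have hc0 : c 0 = 0 := by
    simp only [hc]
    norm_num
    rw [show -γ + (1 + 2 * γ) = 1 + γ by ring, div_eq_mul_inv]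
    ring
  rw [hc0, zero_add]
  apply tsum_congr
  intro k
  have e1 : -γ * ((↑(k + 1 + 1) : ℝ)) + (1 + 2 * γ) = 1 - γ * k := by push_cast; ring
  have e2 : -γ * ((↑(k + 1) : ℝ)) + (1 + γ) = 1 - γ * k := by push_cast; ring
  simp only [hc, e1, e2]
  rcases eq_or_ne (Real.Gamma (1 - γ * k)) 0 with hG | hG
  · simp [hG]
  · have hfac2 : (((k + 1 + 1).factorial : ℝ)) = ((k : ℝ) + 2) * (((k : ℝ) + 1) * k.factorial) := by
      rw [Nat.factorial_succ, Nat.factorial_succ]; push_cast; ring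
    have hfac1 : (((k + 1).factorial : ℝ)) = ((k : ℝ) + 1) * k.factorial := by
      rw [Nat.factorial_succ]; push_cast; ring
    have hp2 : (-a) ^ (k + 1 + 1) = (-1) ^ k * a ^ (k + 2) := by
      rw [show k + 1 + 1 = k + 2 by ring, neg_pow, pow_add]
      norm_num
    have hp1 : (-a) ^ (k + 1) = -((-1) ^ k * a ^ (k + 1)) := by
      rw [neg_pow, pow_add]
      norm_num
    rw [hfac2, hfac1, hp2, hp1]
    have hk1 : ((k : ℝ) + 1) ≠ 0 := by positivity
    have hk2 : ((k : ℝ) + 2) ≠ 0 := by positivity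
    have hkf : ((k.factorial : ℝ)) ≠ 0 := by positivity
    field_simp
    ring

end WrightAux

/-- The moment integral `∫_0^{s(t)} z u(z,t) dz` for the similarity solution,
with `s(t) = 2ξ t^{α/2}`, `D = 1 - W(-2ξ,-α/2,1)`. -/
theorem moment_integral_formula
    (α ξ D : ℝ) (hα : 0 < α) (hα1 : α < 1) (hξ : 0 < ξ)
    (hD : D = 1 - wright (-(2 * ξ)) (-(α / 2)) 1)
    (u : ℝ → ℝ → ℝ)
    (hu : ∀ x t : ℝ, u x t
      = 1 - (1 - wright (-(x / t ^ (α / 2))) (-(α / 2)) 1) / D) :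
    ∀ t > (0 : ℝ),
      (∫ z in (0 : ℝ)..(2 * ξ * t ^ (α / 2)), z * u z t)
        = 2 * ξ ^ 2 * t ^ α * (1 - 1 / D)
          - t ^ α * wright (-(2 * ξ)) (-(α / 2)) (1 + α) / D
          - 2 * ξ * t ^ α * wright (-(2 * ξ)) (-(α / 2)) (1 + α / 2) / D
          + t ^ α / (D * Real.Gamma (1 + α)) := by
  intro t ht
  have hγ0 : 0 < α / 2 := by linarith
  have hγ : 2 * (α / 2) ≤ 1 := by linarith
  set τ : ℝ := t ^ (α / 2) with hτ
  have hτpos : 0 < τ := Real.rpow_pos_of_pos ht _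
  set s : ℝ := 2 * ξ * τ with hs
  have hs0 : 0 < s := by positivity
  have hτ2 : τ * τ = t ^ α := by
    rw [hτ, ← Real.rpow_add ht]
    norm_num
  clear_value τ s
  set F : ℕ → ℝ → ℝ := fun k z =>
    (if k = 0 then (1 - 1 / D) * z else 0)
      + 1 / D * ((-(z / τ)) ^ k / (k.factorial * Real.Gamma (-(α / 2) * k + 1))) * z with hF
  have hsumW : ∀ z : ℝ, Summable
      (fun k : ℕ => (-(z / τ)) ^ k / ((k.factorial : ℝ) * Real.Gamma (-(α / 2) * k + 1))) :=
    fun z => summable_wright (α / 2) 1 _ hγ0 hγ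
  -- pointwise identity
  have hzu : ∀ z : ℝ, z * u z t = ∑' k, F k z := by
    intro z
    have hW : wright (-(z / τ)) (-(α / 2)) 1
        = ∑' k : ℕ, (-(z / τ)) ^ k / ((k.factorial : ℝ) * Real.Gamma (-(α / 2) * k + 1)) := rfl
    have h1 : ∑' k, F k z
        = (1 - 1 / D) * z
          + 1 / D * (∑' k : ℕ, (-(z / τ)) ^ k / ((k.factorial : ℝ)
              * Real.Gamma (-(α / 2) * k + 1))) * z := by
      rw [hF]
      rw [Summable.tsum_add ((hasSum_ite_eq 0 ((1 - 1 / D) * z)).summable)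
        (((hsumW z).mul_left (1 / D)).mul_right z)]
      rw [tsum_ite_eq, tsum_mul_right, tsum_mul_left]
    rw [hu z t, ← hτ, h1, ← hW]
    simp only [div_eq_mul_inv]
    ring
  -- continuity
  have hFcont : ∀ k, Continuous (F k) := by
    intro k
    rcases eq_or_ne k 0 with rfl | hk
    · simp only [hF, reduceIte]
      fun_prop
    · simp only [hF, if_neg hk]
      fun_prop
  -- bound
  set B : ℕ → ℝ := fun k => (if k = 0 then |1 - 1 / D| * s else 0)
      + |1 / D| * ((s / τ) ^ k / (k.factorial * |Real.Gamma (-(α / 2) * k + 1)|)) * s with hB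
  have hB0 : ∀ k, 0 ≤ B k := by
    intro k
    have h1 : (0:ℝ) ≤ (if k = 0 then |1 - 1 / D| * s else 0) := by
      split <;> positivity
    have h2 : (0:ℝ) ≤ |1 / D| * ((s / τ) ^ k / (k.factorial * |Real.Gamma (-(α / 2) * k + 1)|)) * s := by
      positivity
    simp only [hB]
    linarith
  have hBsum : Summable B := by
    apply Summable.add
    · exact (hasSum_ite_eq 0 _).summable
    · have h := ((summable_bound (α / 2) 1 (s / τ) hγ0 hγ).mul_left |1 / D|).mul_right s
      apply h.congr
      intro k
      have h1 : |s / τ| = s / τ := abs_of_pos (by positivity)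
      have h2 : (1 : ℝ) - α / 2 * k = -(α / 2) * k + 1 := by ring
      rw [h1, h2]
  have hFle : ∀ k, ∀ z ∈ Set.Ioc (0:ℝ) s, ‖F k z‖ ≤ B k := by
    intro k z hz
    obtain ⟨hz0, hzs⟩ := hz
    simp only [hF, hB]
    refine le_trans (norm_add_le _ _) (add_le_add ?_ ?_)
    · split
      · rw [norm_mul, Real.norm_eq_abs, Real.norm_eq_abs]
        exact mul_le_mul_of_nonneg_left (by rw [abs_of_pos hz0]; exact hzs) (abs_nonneg _)
      · simp
    · have hQ : |(-(z / τ)) ^ k / ((k.factorial : ℝ) * Real.Gamma (-(α / 2) * k + 1))|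
          = (z / τ) ^ k / (k.factorial * |Real.Gamma (-(α / 2) * k + 1)|) := by
        rw [abs_div, abs_pow, abs_neg, abs_mul, Nat.abs_cast, abs_of_pos (div_pos hz0 hτpos)]
      have hmono : (z / τ) ^ k / ((k.factorial : ℝ) * |Real.Gamma (-(α / 2) * k + 1)|)
          ≤ (s / τ) ^ k / (k.factorial * |Real.Gamma (-(α / 2) * k + 1)|) := by
        rcases eq_or_ne (Real.Gamma (-(α / 2) * k + 1)) 0 with hG | hG
        · rw [hG]
          simp
        · have h1 : 0 < (k.factorial : ℝ) * |Real.Gamma (-(α / 2) * k + 1)| := by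
            have := abs_pos.2 hG
            positivity
          apply (div_le_div_iff_of_pos_right h1).2
          have hzτ : z / τ ≤ s / τ := by gcongr
          exact pow_le_pow_left₀ (by positivity) hzτ k
      calc ‖1 / D * ((-(z / τ)) ^ k / ((k.factorial : ℝ)
              * Real.Gamma (-(α / 2) * k + 1))) * z‖
          = |1 / D| * |(-(z / τ)) ^ k / ((k.factorial : ℝ)
              * Real.Gamma (-(α / 2) * k + 1))| * |z| := by
            rw [norm_mul, norm_mul, Real.norm_eq_abs, Real.norm_eq_abs, Real.norm_eq_abs]
        _ ≤ |1 / D| * ((s / τ) ^ k / (k.factorial * |Real.Gamma (-(α / 2) * k + 1)|)) * s := by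
            rw [hQ, abs_of_pos hz0]
            have h2 : (0:ℝ) ≤ (z / τ) ^ k / (k.factorial * |Real.Gamma (-(α / 2) * k + 1)|) := by
              positivity
            exact mul_le_mul (mul_le_mul_of_nonneg_left hmono (abs_nonneg _)) hzs hz0.le
              (by positivity)
  -- lintegral bound
  have hlint : ∑' k, ∫⁻ z in Set.Ioc (0:ℝ) s, ‖F k z‖₊ ≠ ⊤ := by
    have h1 : ∀ k, ∫⁻ z in Set.Ioc (0:ℝ) s, ‖F k z‖₊ ≤ ENNReal.ofReal (B k) * ENNReal.ofReal s := by
      intro k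
      calc ∫⁻ z in Set.Ioc (0:ℝ) s, ‖F k z‖₊
          ≤ ∫⁻ _z in Set.Ioc (0:ℝ) s, ENNReal.ofReal (B k) := by
            apply lintegral_mono_ae
            refine (ae_restrict_iff' measurableSet_Ioc).2 (ae_of_all _ fun z hz => ?_)
            rw [← ENNReal.ofReal_coe_nnreal, coe_nnnorm]
            exact ENNReal.ofReal_le_ofReal (hFle k z hz)
        _ = ENNReal.ofReal (B k) * ENNReal.ofReal s := by
            rw [MeasureTheory.lintegral_const, Measure.restrict_apply MeasurableSet.univ,
              Set.univ_inter, Real.volume_Ioc]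
            norm_num
    have h2 : ∑' k, ∫⁻ z in Set.Ioc (0:ℝ) s, ‖F k z‖₊
        ≤ ∑' k, ENNReal.ofReal (B k) * ENNReal.ofReal s := ENNReal.tsum_le_tsum h1
    have h3 : (∑' k, ENNReal.ofReal (B k) * ENNReal.ofReal s)
        = ENNReal.ofReal (∑' k, B k) * ENNReal.ofReal s := by
      rw [ENNReal.tsum_mul_right, ENNReal.ofReal_tsum_of_nonneg hB0 hBsum]
    refine ne_top_of_le_ne_top ?_ h2
    rw [h3]
    exact ENNReal.mul_ne_top ENNReal.ofReal_ne_top ENNReal.ofReal_ne_top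
  -- per-k integrals
  have hint_k : ∀ k, (∫ z in Set.Ioc (0:ℝ) s, F k z)
      = (if k = 0 then (1 - 1 / D) * (s ^ 2 / 2) else 0)
        + 1 / D * ((-(1 / τ)) ^ k / (k.factorial * Real.Gamma (-(α / 2) * k + 1)))
          * (s ^ (k + 2) / ((k : ℝ) + 2)) := by
    intro k
    rw [← intervalIntegral.integral_of_le hs0.le]
    have hFz : ∀ z : ℝ, F k z = (if k = 0 then (1 - 1 / D) * z else 0)
        + (1 / D * ((-(1 / τ)) ^ k / (k.factorial * Real.Gamma (-(α / 2) * k + 1))))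
          * z ^ (k + 1) := by
      intro z
      simp only [hF]
      have h1 : (-(z / τ)) ^ k = (-(1 / τ)) ^ k * z ^ k := by
        rw [← mul_pow]
        congr 1
        field_simp
      rw [h1, pow_succ]
      ring
    have hIcont1 : IntervalIntegrable (fun z : ℝ => if k = 0 then (1 - 1 / D) * z else 0)
        volume 0 s := by
      rcases eq_or_ne k 0 with rfl | hk
      · simp only [reduceIte]
        exact (by fun_prop : Continuous fun z : ℝ => (1 - 1 / D) * z).intervalIntegrable 0 s
      · simp only [if_neg hk]
        exact (continuous_const (y := (0:ℝ))).intervalIntegrable 0 s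
    have hIcont2 : IntervalIntegrable (fun z : ℝ =>
        (1 / D * ((-(1 / τ)) ^ k / (k.factorial * Real.Gamma (-(α / 2) * k + 1)))) * z ^ (k + 1))
        volume 0 s := by
      exact (continuous_const.mul (continuous_pow (k+1))).intervalIntegrable 0 s
    rw [intervalIntegral.integral_congr (fun z _ => hFz z)]
    rw [intervalIntegral.integral_add hIcont1 hIcont2]
    congr 1
    · rcases eq_or_ne k 0 with rfl | hk
      · simp only [reduceIte]
        rw [intervalIntegral.integral_const_mul, integral_id]
        norm_num
      · simp only [if_neg hk]
        simp
    · rw [intervalIntegral.integral_const_mul, integral_pow]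
      rw [zero_pow (by omega : k + 1 + 1 ≠ 0)]
      push_cast
      ring
  -- put everything together
  have hsum2 : Summable (fun k : ℕ =>
      1 / D * ((-(1 / τ)) ^ k / ((k.factorial : ℝ) * Real.Gamma (-(α / 2) * k + 1)))
        * (s ^ (k + 2) / ((k : ℝ) + 2))) := by
    apply Summable.of_norm_bounded
      (g := fun k : ℕ => |1 / D| * s ^ 2 * ((s / τ) ^ k / ((k.factorial : ℝ)
        * |Real.Gamma (-(α / 2) * k + 1)|)))
    · apply Summable.mul_left
      have h := summable_bound (α / 2) 1 (s / τ) hγ0 hγ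
      apply h.congr
      intro k
      have h1 : |s / τ| = s / τ := abs_of_pos (by positivity)
      have h2 : (1 : ℝ) - α / 2 * k = -(α / 2) * k + 1 := by ring
      rw [h1, h2]
    · intro k
      have hk2 : (0:ℝ) < (k : ℝ) + 2 := by positivity
      rcases eq_or_ne (Real.Gamma (-(α / 2) * k + 1)) 0 with hG | hG
      · rw [hG]
        simp
      · have hKpos : 0 < (k.factorial : ℝ) * |Real.Gamma (-(α / 2) * k + 1)| := by
          have := abs_pos.2 hG
          positivity
        have hnorm : ‖1 / D * ((-(1 / τ)) ^ k / ((k.factorial : ℝ)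
              * Real.Gamma (-(α / 2) * k + 1))) * (s ^ (k + 2) / ((k : ℝ) + 2))‖
            = |1 / D| * ((1 / τ) ^ k / ((k.factorial : ℝ)
              * |Real.Gamma (-(α / 2) * k + 1)|)) * (s ^ (k + 2) / ((k : ℝ) + 2)) := by
          rw [Real.norm_eq_abs, abs_mul, abs_mul]
          congr 1
          · congr 1
            rw [abs_div, abs_pow, abs_neg, abs_mul, Nat.abs_cast,
              abs_of_pos (by positivity : (0:ℝ) < 1 / τ)]
          · rw [abs_div, abs_of_pos (pow_pos hs0 _), abs_of_pos hk2]
        rw [hnorm]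
        have hτne : τ ≠ 0 := ne_of_gt hτpos
        calc |1 / D| * ((1 / τ) ^ k / ((k.factorial : ℝ)
              * |Real.Gamma (-(α / 2) * k + 1)|)) * (s ^ (k + 2) / ((k : ℝ) + 2))
            = |1 / D| * s ^ 2 * ((s / τ) ^ k / ((k.factorial : ℝ)
              * |Real.Gamma (-(α / 2) * k + 1)|)) * (1 / ((k : ℝ) + 2)) := by
              rw [div_pow, div_pow, one_pow, pow_add]
              field_simp
          _ ≤ |1 / D| * s ^ 2 * ((s / τ) ^ k / ((k.factorial : ℝ)
              * |Real.Gamma (-(α / 2) * k + 1)|)) * 1 := by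
              apply mul_le_mul_of_nonneg_left _ (by positivity)
              rw [div_le_one hk2]
              linarith
          _ = |1 / D| * s ^ 2 * ((s / τ) ^ k / ((k.factorial : ℝ)
              * |Real.Gamma (-(α / 2) * k + 1)|)) := mul_one _
  -- main computation
  rw [intervalIntegral.integral_of_le hs0.le]
  rw [MeasureTheory.setIntegral_congr_fun measurableSet_Ioc (fun z _ => hzu z)]
  rw [MeasureTheory.integral_tsum
    (fun k => ((hFcont k).aestronglyMeasurable).restrict) hlint]
  rw [tsum_congr hint_k]
  rw [Summable.tsum_add ((hasSum_ite_eq 0 ((1 - 1 / D) * (s ^ 2 / 2))).summable) hsum2, tsum_ite_eq]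
  have hterm : ∀ k : ℕ,
      1 / D * ((-(1 / τ)) ^ k / ((k.factorial : ℝ) * Real.Gamma (-(α / 2) * k + 1)))
        * (s ^ (k + 2) / ((k : ℝ) + 2))
      = (1 / D * (τ * τ)) * ((-1) ^ k * (2 * ξ) ^ (k + 2)
          / (((k : ℝ) + 2) * k.factorial * Real.Gamma (1 - α / 2 * k))) := by
    intro k
    have hτne : τ ≠ 0 := ne_of_gt hτpos
    have hk2 : ((k : ℝ) + 2) ≠ 0 := by positivity
    have hkf : ((k.factorial : ℝ)) ≠ 0 := by positivity
    have harg : (1 : ℝ) - α / 2 * k = -(α / 2) * k + 1 := by ring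
    rw [harg]
    rcases eq_or_ne (Real.Gamma (-(α / 2) * k + 1)) 0 with hG | hG
    · rw [hG]
      simp
    · have hsp : s ^ (k + 2) = (2 * ξ) ^ (k + 2) * τ ^ (k + 2) := by
        rw [hs, mul_pow]
      have hneg : (-(1 / τ)) ^ k = (-1) ^ k * (1 / τ) ^ k := by
        rw [← neg_one_mul, mul_pow]
      have hcan : (1 / τ) ^ k * τ ^ k = 1 := by
        rw [← mul_pow, one_div_mul_cancel hτne, one_pow]
      have hnum : (1 / τ) ^ k * s ^ (k + 2) = (τ * τ) * (2 * ξ) ^ (k + 2) := by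
        rw [hsp]
        calc (1 / τ) ^ k * ((2 * ξ) ^ (k + 2) * τ ^ (k + 2))
            = ((1 / τ) ^ k * τ ^ k) * ((2 * ξ) ^ (k + 2) * τ ^ 2) := by
              rw [pow_add]
              ring
          _ = (τ * τ) * (2 * ξ) ^ (k + 2) := by
              rw [hcan, one_mul]
              ring
      rw [hneg]
      set G : ℝ := Real.Gamma (-(α / 2) * k + 1) with hGdef
      set c2 : ℝ := (k : ℝ) + 2 with hc2
      clear_value G c2
      calc 1 / D * ((-1) ^ k * (1 / τ) ^ k / ((k.factorial : ℝ) * G)) * (s ^ (k + 2) / c2)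
          = 1 / D * ((-1) ^ k * ((1 / τ) ^ k * s ^ (k + 2))
              / (c2 * k.factorial * G)) := by
            ring
        _ = 1 / D * (τ * τ) * ((-1) ^ k * (2 * ξ) ^ (k + 2)
              / (c2 * k.factorial * G)) := by
            rw [hnum]
            ring
  rw [tsum_congr hterm, tsum_mul_left, series_id (α / 2) (2 * ξ) hγ0 hγ]
  have e1 : (1 : ℝ) + 2 * (α / 2) = 1 + α := by ring
  have e2 : (1 : ℝ) + α / 2 = 1 + α / 2 := rfl
  rw [e1]
  have hs2 : s ^ 2 / 2 = 2 * ξ ^ 2 * (τ * τ) := by rw [hs]; ring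
  rw [hs2, hτ2]
  simp only [div_eq_mul_inv, mul_inv]
  ring
end
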